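/- Let n ≥ 2 and let x₁, …, xₙ be real numbers with x₁ + ⋯ + xₙ = 0. Then x₁³ + ⋯ + xₙ³ ≥ -((n-2)/√(n(n-1))) · (x₁² + ⋯ + xₙ²)^{3/2}. -/

import Mathlib

/-- Scalar (eigenvalue) form of the Okumura inequality: if `x₁ + ⋯ + xₙ = 0` (`n ≥ 2`), then
`x₁³ + ⋯ + xₙ³ ≥ -((n-2)/√(n(n-1))) · (x₁² + ⋯ + xₙ²)^(3/2)`. -/
theorem okumura_scalar {n : ℕ} (hn : 2 ≤ n) (x : Fin n → ℝ) (hx : ∑ i, x i = 0) :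
    ∑ i, (x i) ^ 3 ≥
      -(((n : ℝ) - 2) / Real.sqrt ((n : ℝ) * ((n : ℝ) - 1))) *
        (∑ i, (x i) ^ 2) ^ ((3 : ℝ) / 2) := by
  have hnR : (2:ℝ) ≤ (n:ℝ) := by exact_mod_cast hn
  set p := ∑ i, (x i)^2 with hp_def
  have hp0 : 0 ≤ p := Finset.sum_nonneg fun i _ => sq_nonneg _
  set q := Real.sqrt p with hq_def
  have hq : q ^ 2 = p := Real.sq_sqrt hp0
  have hq0 : 0 ≤ q := Real.sqrt_nonneg _
  set s := Real.sqrt ((n:ℝ) * ((n:ℝ)-1)) with hs_def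
  have hs2 : s ^ 2 = (n:ℝ) * ((n:ℝ)-1) := Real.sq_sqrt (by nlinarith)
  have hs0 : 0 < s := Real.sqrt_pos.mpr (by nlinarith)
  set a := q / s with ha_def
  have ha0 : 0 ≤ a := div_nonneg hq0 hs0.le
  set M := ((n:ℝ)-1) * a with hM_def
  have hM0 : 0 ≤ M := mul_nonneg (by linarith) ha0
  -- Cauchy-Schwarz bound on each coordinate
  have hbound : ∀ i, (n:ℝ) * x i ^ 2 ≤ ((n:ℝ)-1) * p := by
    intro i
    have hsum : ∑ j ∈ Finset.univ.erase i, x j = - x i := by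
      rw [Finset.sum_erase_eq_sub (Finset.mem_univ i), hx]; ring
    have hsumsq : ∑ j ∈ Finset.univ.erase i, x j ^ 2 = p - x i ^ 2 := by
      rw [Finset.sum_erase_eq_sub (Finset.mem_univ i)]
    have hcs := sq_sum_le_card_mul_sum_sq (s := Finset.univ.erase i) (f := x)
    rw [hsum, hsumsq] at hcs
    have hcard : ((Finset.univ.erase i).card : ℝ) = (n:ℝ) - 1 := by
      rw [Finset.card_erase_of_mem (Finset.mem_univ i)]
      simp [Nat.cast_sub (by omega : 1 ≤ n)]
    rw [hcard] at hcs
    nlinarith [hcs]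
  have hM2 : M ^ 2 = ((n:ℝ)-1) * p / (n:ℝ) := by
    have : a ^ 2 = p / ((n:ℝ) * ((n:ℝ)-1)) := by
      rw [ha_def, div_pow, hq, hs2]
    have h1 : (n:ℝ) ≠ 0 := by positivity
    have h2 : (n:ℝ) - 1 ≠ 0 := by linarith
    rw [hM_def, mul_pow, this]
    field_simp
  have hxM : ∀ i, -M ≤ x i := by
    intro i
    by_contra h
    push_neg at h
    have h2 : M ^ 2 < x i ^ 2 := by nlinarith [hM0]
    have hn0 : (0:ℝ) < (n:ℝ) := by linarith
    have h3 : (n:ℝ) * M ^ 2 < (n:ℝ) * x i ^ 2 := by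
      exact mul_lt_mul_of_pos_left h2 hn0
    rw [hM2] at h3
    have h4 := hbound i
    have h5 : (n:ℝ) * ((↑n - 1) * p / ↑n) = (↑n - 1) * p := by field_simp
    linarith [h5 ▸ h3]
  -- key nonnegative sum
  have hpos : 0 ≤ ∑ i, (x i - a) ^ 2 * (x i + M) :=
    Finset.sum_nonneg fun i _ =>
      mul_nonneg (sq_nonneg _) (by linarith [hxM i])
  have hkey : ∑ i, (x i - a) ^ 2 * (x i + M)
      = ∑ i, x i ^ 3 + (M - 2*a) * p + (n:ℝ) * (a^2 * M) := by
    have : ∀ i ∈ Finset.univ, (x i - a) ^ 2 * (x i + M)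
        = x i ^ 3 + (M - 2*a) * x i ^ 2 + (a^2 - 2*a*M) * x i + a^2 * M := by
      intro i _; ring
    rw [Finset.sum_congr rfl this]
    simp only [Finset.sum_add_distrib, ← Finset.mul_sum, Finset.sum_const,
      Finset.card_univ, Fintype.card_fin, nsmul_eq_mul, hx, ← hp_def]
    ring
  have hmain : ∑ i, x i ^ 3 ≥ (2*a - M) * p - (n:ℝ) * (a^2 * M) := by linarith [hpos, hkey.symm.le]
  -- rewrite the RHS
  have hrpow : p ^ ((3:ℝ)/2) = q ^ 3 := by
    rw [show ((3:ℝ)/2) = (1/2) * 3 by norm_num, Real.rpow_mul hp0,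
      ← Real.sqrt_eq_rpow, ← hq_def, ← Real.rpow_natCast q 3]
    norm_num
  have hq2 : q ^ 2 = p := hq
  have heq : (2*a - M) * p - (n:ℝ) * (a^2 * M)
      = -(((n:ℝ) - 2) / s) * p ^ ((3:ℝ)/2) := by
    rw [hrpow, hM_def, ha_def]
    have hs0' : s ≠ 0 := hs0.ne'
    field_simp
    rw [← hq2]
    linear_combination q^3 * hs2
  rw [← heq]
  exact hmain
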